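/- Let X ⊆ 2^ω and let W = { y ∈ 2^ω : there exists x ∈ X with y =* x }, where y =* x means y(n) = x(n) for all but finitely many n. Then F_X = F_W, where F_X denotes the Raisonnier filter of X. -/

import Mathlib

open Filter Set

/-- The splitting point of two distinct elements of Cantor space. -/
noncomputable def splitPt (x y : ℕ → Bool) : ℕ := sInf {n | x n ≠ y n}

/-- The set of splitting points of a set `X ⊆ 2^ω`. -/
def splitPts (X : Set (ℕ → Bool)) : Set ℕ :=
  {k | ∃ x ∈ X, ∃ y ∈ X, x ≠ y ∧ splitPt x y = k}

/-- The Raisonnier filter of `X ⊆ 2^ω`: all `a ⊆ ℕ` such that there is a countable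
family `(Y n)` covering `X` with `⋃ n, H(Y n) ⊆ a`. -/
def raisonnier (X : Set (ℕ → Bool)) : Set (Set ℕ) :=
  {a | ∃ Y : ℕ → Set (ℕ → Bool), X ⊆ (⋃ n, Y n) ∧ (⋃ n, splitPts (Y n)) ⊆ a}

lemma splitPt_spec {x y : ℕ → Bool} (h : x ≠ y) :
    x (splitPt x y) ≠ y (splitPt x y) ∧ ∀ j < splitPt x y, x j = y j := by
  have hne : {n | x n ≠ y n}.Nonempty := by
    by_contra hc
    apply h
    funext n
    by_contra hn
    exact hc ⟨n, hn⟩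
  refine ⟨Nat.sInf_mem hne, fun j hj => ?_⟩
  by_contra hj'
  exact absurd (Nat.sInf_le hj') (not_le.mpr hj)

lemma splitPt_eq {x y : ℕ → Bool} (h : x ≠ y) {k : ℕ} (hk : x k ≠ y k)
    (hlt : ∀ j < k, x j = y j) : splitPt x y = k := by
  rcases lt_trichotomy (splitPt x y) k with h'|h'|h'
  · exact absurd (hlt _ h') (splitPt_spec h).1
  · exact h'
  · exact absurd ((splitPt_spec h).2 _ h') hk

theorem stmt5 (X : Set (ℕ → Bool))
    (W : Set (ℕ → Bool)) (hW : W = {y | ∃ x ∈ X, ∀ᶠ n in atTop, y n = x n}) :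
    raisonnier X = raisonnier W := by
  have hXW : X ⊆ W := by
    intro x hx
    rw [hW]
    exact ⟨x, hx, Eventually.of_forall fun n => rfl⟩
  apply Set.Subset.antisymm
  · -- hard direction: a ∈ raisonnier X → a ∈ raisonnier W
    rintro a ⟨Y, hcov, hsplit⟩
    set I := ℕ × List Bool × List Bool
    set Z : I → Set (ℕ → Bool) := fun p =>
      {y | ∃ x ∈ Y p.1, (∀ j, p.2.1.length ≤ j → y j = x j) ∧
        (∀ j, j < p.2.1.length → y j = p.2.1.getD j false) ∧
        (∀ j, j < p.2.1.length → x j = p.2.2.getD j false)} with hZ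
    refine ⟨fun n => ((Encodable.decode (α := I) n).elim ∅ Z), ?_, ?_⟩
    · intro y hy
      rw [hW] at hy
      obtain ⟨x, hx, hev⟩ := hy
      obtain ⟨m, hm⟩ := eventually_atTop.mp hev
      obtain ⟨n0, hn0⟩ := mem_iUnion.mp (hcov hx)
      set s : List Bool := List.ofFn (fun j : Fin m => y j) with hs
      set t : List Bool := List.ofFn (fun j : Fin m => x j) with ht
      have hslen : s.length = m := List.length_ofFn
      refine mem_iUnion.mpr ⟨Encodable.encode ((n0, s, t) : I), ?_⟩
      rw [Encodable.encodek]
      refine ⟨x, hn0, ?_, ?_, ?_⟩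
      · intro j hj
        exact hm j (le_trans (le_of_eq hslen.symm) (by simpa using hj))
      · intro j hj
        rw [hslen] at hj
        rw [hs, List.getD_eq_getElem _ _ (by simpa using hj)]
        simp
      · intro j hj
        rw [hslen] at hj
        rw [ht, List.getD_eq_getElem _ _ (by simpa using hj)]
        simp
    · intro k hk
      obtain ⟨n, hn⟩ := mem_iUnion.mp hk
      cases hd : Encodable.decode (α := I) n with
      | none => simp only [hd, Option.elim] at hn; simp [splitPts] at hn
      | some p =>
        simp only [hd, Option.elim] at hn
        obtain ⟨y, hy, y', hy', hne, hkeq⟩ := hn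
        obtain ⟨x, hx, hx1, hx2, hx3⟩ := hy
        obtain ⟨x', hx', hx1', hx2', hx3'⟩ := hy'
        set L := p.2.1.length
        -- splitting point of y, y' is ≥ L
        have hylow : ∀ j, j < L → y j = y' j := fun j hj => (hx2 j hj).trans (hx2' j hj).symm
        have hxlow : ∀ j, j < L → x j = x' j := fun j hj => (hx3 j hj).trans (hx3' j hj).symm
        have hkin := (splitPt_spec hne).1
        have hklt := (splitPt_spec hne).2
        rw [hkeq] at hkin hklt
        have hkL : L ≤ k := by
          by_contra hc
          exact hkin (hylow k (by omega))
        have hxk : x k ≠ x' k := by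
          rw [← hx1 k hkL, ← hx1' k hkL]; exact hkin
        have hxne : x ≠ x' := fun h => hxk (by rw [h])
        have : splitPt x x' = k := by
          refine splitPt_eq hxne hxk fun j hj => ?_
          rcases lt_or_ge j L with h'|h'
          · exact hxlow j h'
          · rw [← hx1 j h', ← hx1' j h']; exact hklt j hj
        apply hsplit
        exact mem_iUnion.mpr ⟨p.1, x, hx, x', hx', hxne, this⟩
  · -- easy direction
    rintro a ⟨Y, hcov, hsplit⟩
    exact ⟨Y, hXW.trans hcov, hsplit⟩
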